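/- arXiv:1604.00602 — 2 statements merged into one kernel-verified Lean document; each statement's English description precedes it below -/
import Mathlib

section
/- Let T > 0, let X ⊆ ℝⁿ be a compact set, let X_T ⊆ X be a target set, and let F : ℝ × ℝⁿ → ℝⁿ be a continuous vector field (the closed-loop dynamics f_φ(t,x) + g_φ(t,x)u(t,x)). Suppose v : ℝ × ℝⁿ → ℝ is continuously differentiable and satisfies: (i) ∂v/∂t(t,y) + ⟨∇ₓv(t,y), F(t,y)⟩ ≤ 0 for all (t,y) ∈ [0,T] × X; (ii) v(t,y) ≥ 0 for all (t,y) ∈ [0,T] × X; and (iii) v(T,y) ≥ α for all y ∈ X_T, where α > 0. Then for every differentiable trajectory x : [0,T] → ℝⁿ with x(t) ∈ X for all t ∈ [0,T], x'(t) = F(t, x(t)) for all t ∈ [0,T], and x(T) ∈ X_T, one has v(t_s, x(t_s)) ≥ α for every t_s ∈ [0,T]. In particular v(t,·) ≥ α at every point of the basin of stability (the set of time-state pairs from which the dynamics drive the state into X_T at time T while remaining in X). -/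
open Set

/-- **Lemma 1 (paper):** If `v` is a feasible point of the optimization problem (D),
i.e. `v` is `C¹`, satisfies the decrease condition
`∂v/∂t(t,y) + ⟨∇ₓv(t,y), F(t,y)⟩ ≤ 0` on `[0,T] × X` (expressed as the total
derivative of `v` in the direction `(1, F(t,y))` being nonpositive), is nonnegative on
`[0,T] × X`, and satisfies `v(T,·) ≥ α` on the target set `X_T`, then along every
trajectory of `ẋ = F(t,x)` that remains in `X` and reaches `X_T` at time `T` we have
`v(t_s, x(t_s)) ≥ α` for all `t_s ∈ [0,T]`.  In particular `v(t,·) ≥ α` on the basin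
of stability. -/
theorem value_ge_alpha_on_basin_of_stability
    {n : ℕ} (T : ℝ) (hT : 0 < T)
    (X : Set (Fin n → ℝ)) (hXcompact : IsCompact X)
    (XT : Set (Fin n → ℝ)) (hXT : XT ⊆ X)
    (F : ℝ × (Fin n → ℝ) → (Fin n → ℝ)) (hF : Continuous F)
    (v : ℝ × (Fin n → ℝ) → ℝ) (hv : ContDiff ℝ 1 v)
    (α : ℝ) (hα : 0 < α)
    (hdecr : ∀ t ∈ Icc (0 : ℝ) T, ∀ y ∈ X, fderiv ℝ v (t, y) (1, F (t, y)) ≤ 0)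
    (hnonneg : ∀ t ∈ Icc (0 : ℝ) T, ∀ y ∈ X, 0 ≤ v (t, y))
    (hterm : ∀ y ∈ XT, α ≤ v (T, y))
    (x : ℝ → (Fin n → ℝ))
    (hxX : ∀ t ∈ Icc (0 : ℝ) T, x t ∈ X)
    (hdyn : ∀ t ∈ Icc (0 : ℝ) T, HasDerivAt x (F (t, x t)) t)
    (hxT : x T ∈ XT) :
    ∀ ts ∈ Icc (0 : ℝ) T, α ≤ v (ts, x ts) := by
  intro ts hts
  set g : ℝ → ℝ := fun t => v (t, x t) with hg
  have hderiv : ∀ t ∈ Icc (0 : ℝ) T,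
      HasDerivAt g (fderiv ℝ v (t, x t) (1, F (t, x t))) t := by
    intro t ht
    have h1 : HasDerivAt (fun s : ℝ => (s, x s)) (1, F (t, x t)) t :=
      HasDerivAt.prodMk (hasDerivAt_id t) (hdyn t ht)
    have h2 : HasFDerivAt v (fderiv ℝ v (t, x t)) (t, x t) :=
      (hv.differentiable one_ne_zero (t, x t)).hasFDerivAt
    exact h2.comp_hasDerivAt t h1
  have hanti : AntitoneOn g (Icc 0 T) := by
    apply antitoneOn_of_deriv_nonpos (convex_Icc 0 T)
    · exact fun t ht => (hderiv t ht).continuousAt.continuousWithinAt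
    · intro t ht
      have ht' : t ∈ Icc (0:ℝ) T := interior_subset ht
      exact ((hderiv t ht').differentiableAt).differentiableWithinAt
    · intro t ht
      have ht' : t ∈ Icc (0:ℝ) T := interior_subset ht
      rw [(hderiv t ht').deriv]
      exact hdecr t ht' (x t) (hxX t ht')
  have : g T ≤ g ts := hanti hts (right_mem_Icc.mpr hT.le) hts.2
  exact le_trans (hterm _ hxT) this
end

section
/- Let T > 0, let X ⊆ ℝⁿ be compact, let X_T ⊆ X, let α > 0, and let F : ℝ × ℝⁿ → ℝⁿ be continuous. Suppose v : ℝ × ℝⁿ → ℝ is continuously differentiable with ∂v/∂t(t,y) + ⟨∇ₓv(t,y), F(t,y)⟩ ≤ 0 for all (t,y) ∈ [0,T] × X and v(T,y) ≥ α for all y ∈ X_T. Fix t₀ ∈ [0,T] and x₀ ∈ X with v(t₀, x₀) < α. Then there is no differentiable trajectory x : [t₀, T] → ℝⁿ with x(t₀) = x₀, x(t) ∈ X for all t ∈ [t₀,T], x'(t) = F(t, x(t)) for all t ∈ [t₀,T], and x(T) ∈ X_T. Equivalently, for each t ∈ [0,T], the time-t slice of the basin of stability is contained in the superlevel set {y ∈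 X : v(t,y) ≥ α}, so the α-superlevel sets of v form an outer approximation of the basin of stability. -/
open Set

/-- **Contrapositive form of Lemma 1 (outer approximation of the BOS):** if `v` is
`C¹`, satisfies the decrease condition
`∂v/∂t(t,y) + ⟨∇ₓv(t,y), F(t,y)⟩ ≤ 0` on `[0,T] × X` (expressed via the total
derivative of `v` in the direction `(1, F(t,y))`) and `v(T,·) ≥ α` on `X_T`, then from
any point `(t₀, x₀) ∈ [0,T] × X` with `v(t₀,x₀) < α` there is no trajectory of
`ẋ = F(t,x)` on `[t₀,T]` that starts at `x₀`, remains in `X`, and reaches `X_T`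
at time `T`.  Hence the time-`t` slice of the basin of stability is contained in
`{y ∈ X : v(t,y) ≥ α}`. -/
theorem sublevel_point_not_in_basin_of_stability
    {n : ℕ} (T : ℝ) (hT : 0 < T)
    (X : Set (Fin n → ℝ)) (hXcompact : IsCompact X)
    (XT : Set (Fin n → ℝ)) (hXT : XT ⊆ X)
    (α : ℝ) (hα : 0 < α)
    (F : ℝ × (Fin n → ℝ) → (Fin n → ℝ)) (hF : Continuous F)
    (v : ℝ × (Fin n → ℝ) → ℝ) (hv : ContDiff ℝ 1 v)
    (hdecr : ∀ t ∈ Icc (0 : ℝ) T, ∀ y ∈ X, fderiv ℝ v (t, y) (1, F (t, y)) ≤ 0)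
    (hterm : ∀ y ∈ XT, α ≤ v (T, y))
    (t₀ : ℝ) (ht₀ : t₀ ∈ Icc (0 : ℝ) T)
    (x₀ : Fin n → ℝ) (hx₀ : x₀ ∈ X)
    (hval : v (t₀, x₀) < α) :
    ¬ ∃ x : ℝ → (Fin n → ℝ),
        x t₀ = x₀ ∧
        (∀ t ∈ Icc t₀ T, x t ∈ X) ∧
        (∀ t ∈ Icc t₀ T, HasDerivAt x (F (t, x t)) t) ∧
        x T ∈ XT := by
  rintro ⟨x, hx0, hxX, hxderiv, hxT⟩
  set g : ℝ → ℝ := fun t => v (t, x t) with hg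
  have hgderiv : ∀ t ∈ Icc t₀ T,
      HasDerivAt g (fderiv ℝ v (t, x t) (1, F (t, x t))) t := by
    intro t ht
    have h1 : HasDerivAt (fun s => (s, x s)) ((1 : ℝ), F (t, x t)) t :=
      (hasDerivAt_id t).prodMk (hxderiv t ht)
    have h2 : HasFDerivAt v (fderiv ℝ v (t, x t)) (t, x t) :=
      (hv.differentiable one_ne_zero (t, x t)).hasFDerivAt
    exact h2.comp_hasDerivAt t h1
  have hanti : AntitoneOn g (Icc t₀ T) := by
    apply antitoneOn_of_deriv_nonpos (convex_Icc t₀ T)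
    · exact fun t ht => ((hgderiv t ht).continuousAt).continuousWithinAt
    · intro t ht
      rw [interior_Icc] at ht
      exact ((hgderiv t ⟨le_of_lt ht.1, le_of_lt ht.2⟩).differentiableAt).differentiableWithinAt
    · intro t ht
      rw [interior_Icc] at ht
      have ht' : t ∈ Icc t₀ T := ⟨le_of_lt ht.1, le_of_lt ht.2⟩
      rw [(hgderiv t ht').deriv]
      exact hdecr t ⟨le_trans ht₀.1 ht'.1, ht'.2⟩ (x t) (hxX t ht')
  have h1 : g T ≤ g t₀ :=
    hanti ⟨le_refl t₀, ht₀.2⟩ ⟨ht₀.2, le_refl T⟩ ht₀.2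
  have h2 : α ≤ g T := hterm (x T) hxT
  have h3 : g t₀ < α := by simpa [g, hx0] using hval
  linarith
end
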